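/- Let φ₁, φ₂ ∈ L²(𝕋,H²) be functions such that, for i = 1,2, φ_i(λ) is an inner function for a.e. λ in E_i = {λ ∈ 𝕋 : φ_i(λ) ≠ 0}, and suppose φ₁·L²(𝕋,H²) = φ₂·L²(𝕋,H²). Then E₁ = E₂ =: E up to a null set, and there exists a measurable function ψ : 𝕋 → ℂ with |ψ(λ)| = 1 for a.e. λ ∈ E and ψ(λ) = 0 for a.e. λ ∉ E, such that φ₂(λ) = ψ(λ)·φ₁(λ) for a.e. λ ∈ 𝕋. -/

import Mathlib

noncomputable section

open MeasureTheory Complex Submodule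
open scoped InnerProductSpace ENNReal ComplexConjugate

set_option synthInstance.maxHeartbeats 1000000
set_option maxHeartbeats 1600000

namespace ShiftPaper

instance : Fact ((0:ℝ) < 1) := ⟨one_pos⟩

/-- The circle, modelled as `ℝ/ℤ`. -/
abbrev 𝕋 : Type := UnitAddCircle

/-- The normalized Haar (Lebesgue) probability measure on the circle. -/
abbrev μT : Measure 𝕋 := AddCircle.haarAddCircle

/-- The space `L²(𝕋, E)` of square-integrable `E`-valued functions on the circle. -/
abbrev L2 (E : Type*) [NormedAddCommGroup E] := Lp E 2 μT

lemma norm_fourier (n : ℤ) (t : 𝕋) : ‖fourier n t‖ = 1 := by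
  rw [fourier_apply]
  exact Circle.norm_coe _

section mulF

variable {E : Type*} [NormedAddCommGroup E] [NormedSpace ℂ E]

lemma memLp_mulF (n : ℤ) (f : L2 E) :
    MemLp (fun t => fourier n t • (f : 𝕋 → E) t) 2 μT := by
  refine MemLp.of_le (Lp.memLp f)
    (((fourier n).continuous.aestronglyMeasurable).smul (Lp.aestronglyMeasurable f)) ?_
  refine Filter.Eventually.of_forall fun t => ?_
  rw [norm_smul, norm_fourier, one_mul]

/-- Multiplication by `fourier n` (i.e. by `λ ↦ λⁿ`) as a bounded operator on `L²(𝕋, E)`.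
For `n = 1` this is the bilateral shift `U`; for general `n : ℤ` it is `Uⁿ`. -/
def mulF (n : ℤ) : L2 E →L[ℂ] L2 E :=
  LinearMap.mkContinuous
    { toFun := fun f => (memLp_mulF n f).toLp _
      map_add' := fun f g => by
        rw [← MemLp.toLp_add (memLp_mulF n f) (memLp_mulF n g)]
        refine MemLp.toLp_congr _ _ ?_
        filter_upwards [Lp.coeFn_add f g] with t ht
        simp only [ht, Pi.add_apply, smul_add]
      map_smul' := fun c f => by
        simp only [RingHom.id_apply]
        rw [← MemLp.toLp_const_smul c (memLp_mulF n f)]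
        refine MemLp.toLp_congr _ _ ?_
        filter_upwards [Lp.coeFn_smul c f] with t ht
        rw [ht]
        simp only [Pi.smul_apply]
        rw [smul_comm] }
    1
    (fun f => by
      simp only [LinearMap.coe_mk, AddHom.coe_mk, one_mul]
      rw [Lp.norm_toLp _ (memLp_mulF n f), Lp.norm_def]
      refine le_of_eq (congrArg ENNReal.toReal ?_)
      refine eLpNorm_congr_norm_ae ?_
      refine Filter.Eventually.of_forall fun t => ?_
      rw [norm_smul, norm_fourier, one_mul])

lemma coeFn_mulF (n : ℤ) (f : L2 E) :
    (mulF n f : 𝕋 → E) =ᵐ[μT] fun t => fourier n t • (f : 𝕋 → E) t :=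
  MemLp.coeFn_toLp (memLp_mulF n f)

end mulF

section HardySpace

variable (K : Type) [NormedAddCommGroup K] [InnerProductSpace ℂ K] [CompleteSpace K]

/-- The continuous function `t ↦ fourier n t • x`. -/
def fourierSmulCM (n : ℤ) (x : K) : C(𝕋, K) :=
  ⟨fun t => fourier n t • x, (fourier n).continuous.smul continuous_const⟩

/-- The element of `L²(𝕋, K)` given by `t ↦ fourier n t • x`. -/
def expVec (n : ℤ) (x : K) : L2 K := ContinuousMap.toLp 2 μT ℂ (fourierSmulCM K n x)

lemma coeFn_expVec (n : ℤ) (x : K) :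
    (expVec K n x : 𝕋 → K) =ᵐ[μT] fun t => fourier n t • x :=
  ContinuousMap.coeFn_toLp (𝕜 := ℂ) μT (fourierSmulCM K n x)

/-- The Hardy space `H²(𝕋, K)`, as the subspace of `L²(𝕋, K)` of functions all of whose
weak Fourier coefficients of negative index vanish (equivalently, all of whose coordinate
functions with respect to an orthonormal basis of `K` lie in the scalar Hardy space `H²`). -/
def Hardy : Submodule ℂ (L2 K) :=
  ⨅ (n : ℤ) (_ : n < 0) (x : K), LinearMap.ker (innerSL ℂ (expVec K n x) : L2 K →ₗ[ℂ] ℂ)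

lemma isClosed_Hardy : IsClosed ((Hardy K : Set (L2 K))) := by
  have h : (Hardy K : Set (L2 K)) = ⋂ (n : ℤ) (_ : n < 0) (x : K),
      (LinearMap.ker (innerSL ℂ (expVec K n x) : L2 K →ₗ[ℂ] ℂ) : Set (L2 K)) := by
    simp only [Hardy, Submodule.coe_iInf]
  rw [h]
  exact isClosed_iInter fun n => isClosed_iInter fun _ => isClosed_iInter fun x =>
    (ContinuousLinearMap.isClosed_ker _)

/-- The Hardy space `H²(𝕋, K)` as a Hilbert space in its own right. -/
abbrev H2 := ↥(Hardy K)

instance : CompleteSpace (H2 K) := (isClosed_Hardy K).completeSpace_coe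

end HardySpace


section Shift

variable (K : Type) [NormedAddCommGroup K] [InnerProductSpace ℂ K] [CompleteSpace K]

lemma inner_expVec_mulF (n : ℤ) (x : K) (f : L2 K) :
    inner ℂ (expVec K n x) (mulF 1 f) = inner ℂ (expVec K (n - 1) x) f := by
  rw [MeasureTheory.L2.inner_def, MeasureTheory.L2.inner_def]
  refine integral_congr_ae ?_
  filter_upwards [coeFn_mulF 1 f, coeFn_expVec K n x, coeFn_expVec K (n-1) x] with t h1 h2 h3
  rw [h1, h2, h3, inner_smul_left, inner_smul_left, inner_smul_right,
    ← fourier_neg, ← fourier_neg, ← mul_assoc, ← fourier_add]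
  have h : -n + 1 = -(n - 1) := by ring
  rw [h]

lemma mulF_mem_hardy {f : L2 K} (hf : f ∈ Hardy K) : mulF 1 f ∈ Hardy K := by
  simp only [Hardy, Submodule.mem_iInf, LinearMap.mem_ker,
    ContinuousLinearMap.coe_coe, innerSL_apply_apply] at hf ⊢
  intro n hn x
  rw [inner_expVec_mulF]
  exact hf (n - 1) (by omega) x

/-- The unilateral shift `S` on the Hardy space `H²(𝕋, K)`: the restriction of the
bilateral shift (multiplication by the variable) to the Hardy space. -/
def S : H2 K →L[ℂ] H2 K where
  toLinearMap := (mulF (E := K) 1).toLinearMap.restrict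
    (p := Hardy K) (q := Hardy K) (fun _ hx => mulF_mem_hardy K hx)
  cont := by
    apply Continuous.subtype_mk
    exact (mulF (E := K) 1).continuous.comp continuous_subtype_val

/-- The operator `Ŝ` on `L²(𝕋, H²(𝕋,K))`, acting pointwisely (on the values) as the
unilateral shift `S`. -/
def Shat : L2 (H2 K) →L[ℂ] L2 (H2 K) := (S K).compLpL 2 μT

lemma integral_fourier_eq_zero {m : ℤ} (hm : m ≠ 0) :
    ∫ t : 𝕋, fourier m t ∂μT = 0 := by
  have h0 : ((0:ℤ)) ≠ m := fun h => hm h.symm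
  have h : inner ℂ (fourierLp (T := 1) 2 (0:ℤ)) (fourierLp 2 m) = 0 :=
    orthonormal_fourier.2 h0
  rw [MeasureTheory.L2.inner_def] at h
  rw [← h]
  refine integral_congr_ae ?_
  filter_upwards [coeFn_fourierLp 2 (0:ℤ), coeFn_fourierLp 2 m] with t h1 h2
  rw [h1, h2]
  simp [fourier_zero]

lemma const_mem_hardy (x : K) : expVec K 0 x ∈ Hardy K := by
  simp only [Hardy, Submodule.mem_iInf, LinearMap.mem_ker,
    ContinuousLinearMap.coe_coe, innerSL_apply_apply]
  intro n hn y
  rw [MeasureTheory.L2.inner_def]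
  have h : ∀ᵐ t ∂μT, inner ℂ ((expVec K n y : 𝕋 → K) t) ((expVec K 0 x : 𝕋 → K) t)
      = fourier (-n) t * inner ℂ y x := by
    filter_upwards [coeFn_expVec K n y, coeFn_expVec K 0 x] with t h1 h2
    rw [h1, h2, inner_smul_left, inner_smul_right, ← fourier_neg, fourier_zero, one_mul]
  rw [integral_congr_ae h, integral_mul_const,
    integral_fourier_eq_zero (by omega), zero_mul]

/-- The linear embedding of `K` into `H²(𝕋,K)` as constant functions. -/
def constL : K →ₗ[ℂ] H2 K where
  toFun x := ⟨expVec K 0 x, const_mem_hardy K x⟩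
  map_add' x y := by
    apply Subtype.ext
    simp only [Submodule.coe_add]
    unfold expVec
    rw [← map_add]
    congr 1
    ext t
    simp [fourierSmulCM, smul_add]
  map_smul' c x := by
    apply Subtype.ext
    simp only [RingHom.id_apply, SetLike.val_smul]
    unfold expVec
    rw [← _root_.map_smul]
    congr 1
    ext t
    simp [fourierSmulCM]

end Shift


section RangeFunctions

variable {F : Type*} [NormedAddCommGroup F] [InnerProductSpace ℂ F] [CompleteSpace F]

/-- The orthogonal projection onto a closed subspace, as a plain function (defined to be `0`
if the subspace is not closed). -/
def projTo (N : Submodule ℂ F) (x : F) : F :=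
  letI := Classical.dec (IsClosed ((N : Set F)))
  if h : IsClosed ((N : Set F)) then
    haveI : CompleteSpace N := h.completeSpace_coe
    (orthogonalProjection N x : F)
  else 0

/-- A measurable range function in `F`: a map `J` from `𝕋` to closed subspaces of `F` such
that `t ↦ ⟪P_{J(t)} x, y⟫` is measurable for every `x, y ∈ F`. -/
def IsMeasRange (J : 𝕋 → Submodule ℂ F) : Prop :=
  (∀ t, IsClosed ((J t : Set F))) ∧
  ∀ x y : F, Measurable fun t => inner ℂ (projTo (J t) x) y

/-- The set of `f ∈ L²(𝕋, E)` such that `f(t) ∈ J(t)` for a.e. `t ∈ 𝕋`. -/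
def rangeSet {E : Type*} [NormedAddCommGroup E] [NormedSpace ℂ E]
    (J : 𝕋 → Submodule ℂ E) : Set (L2 E) :=
  {f | ∀ᵐ t ∂μT, (f : 𝕋 → E) t ∈ J t}

end RangeFunctions

section OperatorNotions

variable {E : Type*} [NormedAddCommGroup E] [NormedSpace ℂ E]

/-- A subspace `M` is invariant under the bounded operator `A` if `A(M) ⊆ M`. -/
def InvariantUnder (A : E →L[ℂ] E) (M : Submodule ℂ E) : Prop :=
  ∀ f ∈ M, A f ∈ M

/-- Two bounded operators commute. -/
def CommutesWith (A B : E →L[ℂ] E) : Prop := ∀ f, A (B f) = B (A f)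

variable {F : Type*} [NormedAddCommGroup F] [InnerProductSpace ℂ F]

/-- A subspace `M` is reducing for `A` if both `M` and `M^⊥` are invariant under `A`. -/
def Reducing (A : F →L[ℂ] F) (M : Submodule ℂ F) : Prop :=
  InvariantUnder A M ∧ InvariantUnder A Mᗮ

/-- `Φ` is a partial isometry with initial space `W`: it is isometric on `W` and vanishes
on `W^⊥`. -/
def IsPartialIsometryOn (Φ : F →L[ℂ] F) (W : Submodule ℂ F) : Prop :=
  (∀ f ∈ W, ‖Φ f‖ = ‖f‖) ∧ ∀ f ∈ Wᗮ, Φ f = 0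

end OperatorNotions

section FullHardy

variable (K : Type) [NormedAddCommGroup K] [InnerProductSpace ℂ K] [CompleteSpace K]

/-- For a subspace `N ⊆ K`, the subspace `H²_N` of `H²_K`: those elements of the Hardy space
taking values in `N` almost everywhere. -/
def hardyIn (N : Submodule ℂ K) : Submodule ℂ (H2 K) where
  carrier := {g | ∀ᵐ z ∂μT, ((g : L2 K) : 𝕋 → K) z ∈ N}
  zero_mem' := by
    have h0 : ((0 : H2 K) : L2 K) = 0 := rfl
    rw [Set.mem_setOf_eq, h0]
    filter_upwards [Lp.coeFn_zero K 2 μT] with z hz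
    rw [hz]
    exact N.zero_mem
  add_mem' := by
    intro a b ha hb
    have h0 : ((a + b : H2 K) : L2 K) = (a : L2 K) + (b : L2 K) := rfl
    rw [Set.mem_setOf_eq, h0]
    filter_upwards [ha, hb, Lp.coeFn_add (a : L2 K) (b : L2 K)] with z ha' hb' hadd
    rw [hadd]
    exact N.add_mem ha' hb'
  smul_mem' := by
    intro c a ha
    have h0 : ((c • a : H2 K) : L2 K) = c • (a : L2 K) := rfl
    rw [Set.mem_setOf_eq, h0]
    filter_upwards [ha, Lp.coeFn_smul c (a : L2 K)] with z ha' hsmul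
    rw [hsmul]
    exact N.smul_mem c ha'

/-- The set of `f ∈ L²(𝕋, H²_K)` with `f(t) ∈ H²_{J(t)}` for a.e. `t`. If `J` is a measurable
range function in `K`, this is the full-Hardy subspace with base `J`. -/
def fullHardySet (J : 𝕋 → Submodule ℂ K) : Set (L2 (H2 K)) :=
  {f | ∀ᵐ t ∂μT, (f : 𝕋 → H2 K) t ∈ hardyIn K (J t)}

/-- A subspace `W ⊆ L²(𝕋, H²_K)` is full-Hardy if it is of the form
`{f : f(t) ∈ H²_{J(t)} a.e.}` for some measurable range function `J` in `K`. -/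
def IsFullHardy (W : Submodule ℂ (L2 (H2 K))) : Prop :=
  ∃ J : 𝕋 → Submodule ℂ K, IsMeasRange J ∧ (W : Set (L2 (H2 K))) = fullHardySet K J

end FullHardy

section Dimension

open scoped Classical in
/-- The Hilbert-space dimension of a subspace, as an element of `ℕ∞` (in a separable ambient
space this is the cardinality of any orthonormal basis). -/
def dimSub {F : Type*} [NormedAddCommGroup F] [InnerProductSpace ℂ F]
    (N : Submodule ℂ F) : ℕ∞ :=
  if FiniteDimensional ℂ ↥N then (Module.finrank ℂ ↥N : ℕ∞) else ⊤

end Dimension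

section ScalarCase

/-- Evaluation of an element of the scalar Hardy space (via its chosen representative). -/
def ev (g : H2 ℂ) (z : 𝕋) : ℂ := ((g : L2 ℂ) : 𝕋 → ℂ) z

/-- Iterated evaluation of an element of `L²(𝕋, H²)`. -/
def ev2 (f : L2 (H2 ℂ)) (t z : 𝕋) : ℂ := ev ((f : 𝕋 → H2 ℂ) t) z

/-- A function `h ∈ H²` is inner if `|h(z)| = 1` for a.e. `z ∈ 𝕋`. -/
def IsInnerFn (g : H2 ℂ) : Prop := ∀ᵐ z ∂μT, ‖ev g z‖ = 1

lemma ev_zero : ∀ᵐ z ∂μT, ev (0 : H2 ℂ) z = 0 := by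
  have h0 : ((0 : H2 ℂ) : L2 ℂ) = 0 := rfl
  unfold ev
  rw [h0]
  filter_upwards [Lp.coeFn_zero ℂ 2 μT] with z hz
  rw [hz]
  rfl

lemma ev_add (u v : H2 ℂ) : ∀ᵐ z ∂μT, ev (u + v) z = ev u z + ev v z := by
  have h0 : ((u + v : H2 ℂ) : L2 ℂ) = (u : L2 ℂ) + (v : L2 ℂ) := rfl
  unfold ev
  rw [h0]
  filter_upwards [Lp.coeFn_add (u : L2 ℂ) (v : L2 ℂ)] with z hz
  rw [hz]
  rfl

lemma ev_smul (c : ℂ) (u : H2 ℂ) : ∀ᵐ z ∂μT, ev (c • u) z = c * ev u z := by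
  have h0 : ((c • u : H2 ℂ) : L2 ℂ) = c • (u : L2 ℂ) := rfl
  unfold ev
  rw [h0]
  filter_upwards [Lp.coeFn_smul c (u : L2 ℂ)] with z hz
  rw [hz]
  rfl

/-- For `w ∈ H²`, the subspace `w·H² = {w·k : k ∈ H²}` of `H²` (membership described via
a.e. pointwise multiplication of representatives). -/
def mulSet (w : H2 ℂ) : Submodule ℂ (H2 ℂ) where
  carrier := {u | ∃ k : H2 ℂ, ∀ᵐ z ∂μT, ev u z = ev w z * ev k z}
  zero_mem' := by
    refine ⟨0, ?_⟩
    filter_upwards [ev_zero] with z hz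
    rw [hz, mul_zero]
  add_mem' := by
    rintro u v ⟨k₁, h₁⟩ ⟨k₂, h₂⟩
    refine ⟨k₁ + k₂, ?_⟩
    filter_upwards [h₁, h₂, ev_add u v, ev_add k₁ k₂] with z e1 e2 e3 e4
    rw [e3, e1, e2, e4, mul_add]
  smul_mem' := by
    rintro c u ⟨k, h⟩
    refine ⟨c • k, ?_⟩
    filter_upwards [h, ev_smul c u, ev_smul c k] with z e1 e2 e3
    rw [e2, e1, e3]
    ring

/-- The set `φ·L²(𝕋, H²) = {φ g : g ∈ L²(𝕋,H²)}`, where `(φ g)(t)(z) = φ(t)(z)·g(t)(z)`. -/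
def timesSet (φ : L2 (H2 ℂ)) : Set (L2 (H2 ℂ)) :=
  {h | ∃ g : L2 (H2 ℂ), ∀ᵐ t ∂μT, ∀ᵐ z ∂μT, ev2 h t z = ev2 φ t z * ev2 g t z}

end ScalarCase

section Statements


section Aux

/-- The constant function `1` as an element of the scalar Hardy space. -/
def e0 : H2 ℂ := ⟨expVec ℂ 0 1, const_mem_hardy ℂ 1⟩

lemma ev_e0 : ∀ᵐ z ∂μT, ev e0 z = 1 := by
  filter_upwards [coeFn_expVec ℂ 0 1] with z hz
  show ((expVec ℂ 0 1 : L2 ℂ) : 𝕋 → ℂ) z = 1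
  rw [hz]
  simp [fourier_zero]

lemma eq_zero_of_ev {u : H2 ℂ} (h : ∀ᵐ z ∂μT, ev u z = 0) : u = 0 := by
  apply Subtype.ext
  apply Lp.ext (μ := μT) (p := (2:ℝ≥0∞))
  filter_upwards [h, Lp.coeFn_zero ℂ 2 μT] with z h1 h2
  show ((u : L2 ℂ) : 𝕋 → ℂ) z = ((0 : L2 ℂ) : 𝕋 → ℂ) z
  rw [h2]
  exact h1

lemma fourierCoeff_congr_ae {f g : 𝕋 → ℂ} (h : f =ᵐ[μT] g) (n : ℤ) :
    fourierCoeff f n = fourierCoeff g n := by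
  unfold fourierCoeff
  refine integral_congr_ae ?_
  filter_upwards [h] with t ht
  rw [ht]

lemma hardy_coeff_neg {u : L2 ℂ} (hu : u ∈ Hardy ℂ) {n : ℤ} (hn : n < 0) :
    fourierCoeff ((u : 𝕋 → ℂ)) n = 0 := by
  simp only [Hardy, Submodule.mem_iInf, LinearMap.mem_ker,
    ContinuousLinearMap.coe_coe, innerSL_apply_apply] at hu
  have h := hu n hn 1
  rw [MeasureTheory.L2.inner_def] at h
  rw [← h]
  unfold fourierCoeff
  refine integral_congr_ae ?_
  filter_upwards [coeFn_expVec ℂ n 1] with t ht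
  rw [ht]
  simp only [RCLike.inner_apply, smul_eq_mul, mul_one, ← fourier_neg]
  rw [mul_comm]

lemma fourierCoeff_const (n : ℤ) :
    fourierCoeff (fun _ : 𝕋 => (1:ℂ)) n = if n = 0 then 1 else 0 := by
  unfold fourierCoeff
  rcases eq_or_ne n 0 with rfl | h
  · simp only [neg_zero, fourier_zero, one_smul, if_pos rfl]
    simp [measure_univ]
  · rw [if_neg h, ← integral_fourier_eq_zero (m := -n) (neg_ne_zero.mpr h)]
    refine integral_congr_ae (Filter.Eventually.of_forall fun t => ?_)
    simp [smul_eq_mul]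

lemma ae_const_of_coeff {v : L2 ℂ}
    (h : ∀ n : ℤ, n ≠ 0 → fourierCoeff ((v : 𝕋 → ℂ)) n = 0) :
    ∀ᵐ z ∂μT, (v : 𝕋 → ℂ) z = fourierCoeff ((v : 𝕋 → ℂ)) 0 := by
  set c := fourierCoeff ((v : 𝕋 → ℂ)) 0 with hc
  have hL : ∀ n : ℤ, fourierCoeff ((fourierLp (T := 1) 2 0 : 𝕋 → ℂ)) n
      = if n = 0 then 1 else 0 := by
    intro n
    rw [← fourierCoeff_const n]
    refine fourierCoeff_congr_ae ?_ n
    filter_upwards [coeFn_fourierLp (T := 1) 2 0] with z hz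
    rw [hz, fourier_zero]
  have hv2 : v = c • fourierLp (T := 1) 2 0 := by
    apply (fourierBasis (T := 1)).repr.injective
    ext n
    calc ((fourierBasis (T := 1)).repr v) n = fourierCoeff ((v : 𝕋 → ℂ)) n := by
          rw [fourierBasis_repr]
      _ = if n = 0 then c else 0 := by
          rcases eq_or_ne n 0 with rfl | hn
          · rw [if_pos rfl]
          · rw [if_neg hn]; exact h n hn
      _ = c * (if n = 0 then 1 else 0) := by
          by_cases hn : n = 0 <;> simp [hn]
      _ = c * fourierCoeff ((fourierLp (T := 1) 2 0 : 𝕋 → ℂ)) n := by rw [hL n]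
      _ = c * ((fourierBasis (T := 1)).repr (fourierLp (T := 1) 2 0)) n := by
          rw [fourierBasis_repr]
      _ = ((fourierBasis (T := 1)).repr (c • fourierLp (T := 1) 2 0)) n := by
          rw [_root_.map_smul, lp.coeFn_smul]
          simp
  rw [hv2]
  filter_upwards [Lp.coeFn_smul c (fourierLp (T := 1) 2 0),
    coeFn_fourierLp (T := 1) 2 0] with z h1 h2
  rw [h1]
  simp only [Pi.smul_apply, smul_eq_mul, h2, fourier_zero, mul_one]

lemma key_const {u v : H2 ℂ} (huv : ∀ᵐ z ∂μT, ev u z * ev v z = 1)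
    (hv : ∀ᵐ z ∂μT, ‖ev v z‖ = 1) :
    ∃ c : ℂ, ‖c‖ = 1 ∧ ∀ᵐ z ∂μT, ev v z = c := by
  have hconj : ∀ᵐ z ∂μT, ev u z = conj (ev v z) := by
    filter_upwards [huv, hv] with z h1 h2
    have hne : ev v z ≠ 0 := by
      intro h0; rw [h0, norm_zero] at h2; norm_num at h2
    have h3 : conj (ev v z) * ev v z = 1 := by
      have h4 := Complex.mul_conj (ev v z)
      rw [mul_comm] at h4
      rw [h4, Complex.normSq_eq_norm_sq, h2, one_pow, Complex.ofReal_one]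
    exact mul_right_cancel₀ hne (h1.trans h3.symm)
  have hall : ∀ n : ℤ, n ≠ 0 → fourierCoeff (((v : L2 ℂ) : 𝕋 → ℂ)) n = 0 := by
    intro n hn
    rcases lt_or_gt_of_ne hn with hn' | hn'
    · exact hardy_coeff_neg v.2 hn'
    · have hu0 : fourierCoeff (((u : L2 ℂ) : 𝕋 → ℂ)) (-n) = 0 :=
        hardy_coeff_neg u.2 (by omega)
      have heq2 : fourierCoeff (((v : L2 ℂ) : 𝕋 → ℂ)) n
          = conj (fourierCoeff (((u : L2 ℂ) : 𝕋 → ℂ)) (-n)) := by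
        unfold fourierCoeff
        rw [← integral_conj]
        refine integral_congr_ae ?_
        filter_upwards [hconj] with z hz
        simp only [ev] at hz
        simp only [smul_eq_mul, map_mul, neg_neg, ← fourier_neg, hz, Complex.conj_conj]
      rw [heq2, hu0, map_zero]
  have hc := ae_const_of_coeff hall
  set c := fourierCoeff (((v : L2 ℂ) : 𝕋 → ℂ)) 0 with hcdef
  have hc' : ∀ᵐ z ∂μT, ev v z = c := hc
  have hne : ‖c‖ = 1 := by
    obtain ⟨z, h1, h2⟩ := (hv.and hc').exists
    rw [← h2]; exact h1
  exact ⟨c, hne, hc'⟩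

end Aux

theorem statement18 (φ₁ φ₂ : L2 (H2 ℂ))
    (h₁ : ∀ᵐ t ∂μT, (φ₁ : 𝕋 → H2 ℂ) t ≠ 0 → IsInnerFn ((φ₁ : 𝕋 → H2 ℂ) t))
    (h₂ : ∀ᵐ t ∂μT, (φ₂ : 𝕋 → H2 ℂ) t ≠ 0 → IsInnerFn ((φ₂ : 𝕋 → H2 ℂ) t))
    (heq : timesSet φ₁ = timesSet φ₂) :
    (∀ᵐ t ∂μT, (φ₁ : 𝕋 → H2 ℂ) t ≠ 0 ↔ (φ₂ : 𝕋 → H2 ℂ) t ≠ 0) ∧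
    ∃ ψ : 𝕋 → ℂ, Measurable ψ ∧
      (∀ᵐ t ∂μT, (φ₁ : 𝕋 → H2 ℂ) t ≠ 0 → ‖ψ t‖ = 1) ∧
      (∀ᵐ t ∂μT, (φ₁ : 𝕋 → H2 ℂ) t = 0 → ψ t = 0) ∧
      (∀ᵐ t ∂μT, (φ₂ : 𝕋 → H2 ℂ) t = ψ t • (φ₁ : 𝕋 → H2 ℂ) t) := by
  classical
  have hself : ∀ φ : L2 (H2 ℂ), φ ∈ timesSet φ := by
    intro φ
    refine ⟨(memLp_const (μ := μT) (p := 2) e0).toLp _, ?_⟩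
    filter_upwards [MemLp.coeFn_toLp (memLp_const (μ := μT) (p := 2) e0)] with t ht
    filter_upwards [ev_e0] with z hz
    unfold ev2
    rw [ht, hz, mul_one]
  have h12 : φ₁ ∈ timesSet φ₂ := by rw [← heq]; exact hself φ₁
  have h21 : φ₂ ∈ timesSet φ₁ := by rw [heq]; exact hself φ₂
  obtain ⟨g, hg⟩ := h12
  obtain ⟨k, hk⟩ := h21
  have hEiff : ∀ᵐ t ∂μT, ((φ₁ : 𝕋 → H2 ℂ) t = 0 ↔ (φ₂ : 𝕋 → H2 ℂ) t = 0) := by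
    filter_upwards [hg, hk] with t hgt hkt
    constructor
    · intro h0
      apply eq_zero_of_ev
      filter_upwards [hkt, ev_zero] with z e1 e2
      unfold ev2 at e1
      rw [h0] at e1
      rw [e1, e2, zero_mul]
    · intro h0
      apply eq_zero_of_ev
      filter_upwards [hgt, ev_zero] with z e1 e2
      unfold ev2 at e1
      rw [h0] at e1
      rw [e1, e2, zero_mul]
  have hEae : ∀ᵐ t ∂μT, ((φ₁ : 𝕋 → H2 ℂ) t ≠ 0 ↔ (φ₂ : 𝕋 → H2 ℂ) t ≠ 0) :=
    hEiff.mono fun t ht => not_congr ht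
  set ψ : 𝕋 → ℂ := fun t =>
    if ‖(φ₁ : 𝕋 → H2 ℂ) t‖ = 0 then 0 else (inner ℂ e0 ((k : 𝕋 → H2 ℂ) t)) with hψdef
  have hmeas : Measurable ψ := by
    have hm1 : Measurable fun t => ‖(φ₁ : 𝕋 → H2 ℂ) t‖ :=
      (Lp.stronglyMeasurable φ₁).norm.measurable
    have hm2 : Measurable fun t => inner ℂ e0 ((k : 𝕋 → H2 ℂ) t) :=
      ((innerSL ℂ e0).continuous.comp_stronglyMeasurable
        (Lp.stronglyMeasurable k)).measurable
    exact Measurable.ite (measurableSet_eq_fun hm1 measurable_const) measurable_const hm2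
  have hmain : ∀ᵐ t ∂μT, ((φ₁ : 𝕋 → H2 ℂ) t ≠ 0 →
      (‖ψ t‖ = 1 ∧ (φ₂ : 𝕋 → H2 ℂ) t = ψ t • (φ₁ : 𝕋 → H2 ℂ) t)) := by
    filter_upwards [hg, hk, h₁, h₂, hEae] with t hgt hkt hi1 hi2 hE hne
    have hne2 : (φ₂ : 𝕋 → H2 ℂ) t ≠ 0 := hE.mp hne
    have hin1 := hi1 hne
    have hin2 := hi2 hne2
    unfold IsInnerFn at hin1 hin2
    unfold ev2 at hgt hkt
    -- k(t)·g(t) = 1 a.e.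
    have hkg : ∀ᵐ z ∂μT, ev ((g : 𝕋 → H2 ℂ) t) z * ev ((k : 𝕋 → H2 ℂ) t) z = 1 := by
      filter_upwards [hgt, hkt, hin1] with z e1 e2 e3
      have hne0 : ev ((φ₁ : 𝕋 → H2 ℂ) t) z ≠ 0 := by
        intro h0; rw [h0, norm_zero] at e3; norm_num at e3
      have h4 : ev ((φ₁ : 𝕋 → H2 ℂ) t) z *
          (ev ((g : 𝕋 → H2 ℂ) t) z * ev ((k : 𝕋 → H2 ℂ) t) z)
          = ev ((φ₁ : 𝕋 → H2 ℂ) t) z * 1 := by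
        rw [mul_one, mul_comm (ev ((g : 𝕋 → H2 ℂ) t) z), ← mul_assoc, ← e2, ← e1]
      exact mul_left_cancel₀ hne0 h4
    -- |k(t)| = 1 a.e.
    have hk1 : ∀ᵐ z ∂μT, ‖ev ((k : 𝕋 → H2 ℂ) t) z‖ = 1 := by
      filter_upwards [hkt, hin1, hin2] with z e2 e3 e4
      have h5 := congrArg norm e2
      rw [norm_mul, e3, one_mul] at h5
      rw [← h5]
      exact e4
    obtain ⟨c, hc1, hcz⟩ := key_const hkg hk1
    have hψt : ψ t = c := by
      have hnorm : ¬ ‖(φ₁ : 𝕋 → H2 ℂ) t‖ = 0 := norm_ne_zero_iff.mpr hne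
      rw [hψdef]
      simp only [if_neg hnorm]
      rw [Submodule.coe_inner, MeasureTheory.L2.inner_def]
      have hint : (fun z => inner ℂ (((e0 : L2 ℂ) : 𝕋 → ℂ) z)
            ((((k : 𝕋 → H2 ℂ) t : L2 ℂ) : 𝕋 → ℂ) z))
          =ᵐ[μT] fun _ => c := by
        filter_upwards [ev_e0, hcz] with z e5 e6
        simp only [ev] at e5 e6
        simp only [RCLike.inner_apply, e5, e6, map_one, one_mul, mul_one]
      rw [integral_congr_ae hint]
      simp [measure_univ]
    refine ⟨by rw [hψt]; exact hc1, ?_⟩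
    apply Subtype.ext
    apply Lp.ext (μ := μT) (p := (2:ℝ≥0∞))
    have hcoe : ((ψ t • (φ₁ : 𝕋 → H2 ℂ) t : H2 ℂ) : L2 ℂ)
        = ψ t • (((φ₁ : 𝕋 → H2 ℂ) t : L2 ℂ)) := rfl
    rw [hcoe]
    filter_upwards [hkt, hcz, Lp.coeFn_smul (ψ t) (((φ₁ : 𝕋 → H2 ℂ) t : L2 ℂ))]
      with z e1 e2 e3
    rw [e3]
    simp only [Pi.smul_apply, smul_eq_mul]
    simp only [ev] at e1 e2
    rw [e1, e2, hψt]
    ring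
  refine ⟨hEae, ψ, hmeas, ?_, ?_, ?_⟩
  · filter_upwards [hmain] with t hm hne
    exact (hm hne).1
  · refine Filter.Eventually.of_forall fun t h0 => ?_
    rw [hψdef]
    simp [h0]
  · filter_upwards [hmain, hEiff] with t hm hE
    by_cases h0 : (φ₁ : 𝕋 → H2 ℂ) t = 0
    · rw [hE.mp h0, h0, smul_zero]
    · exact (hm h0).2


end Statements

end ShiftPaper
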